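/- Let d ≥ 1, let n ∈ ℝ^d with ‖n‖ = 1, and let A : ℝ^d → ℝ^d be a linear map. Assume: (i) A t = 0 for every t ∈ ℝ^d with ⟨t, n⟩ = 0; (ii) trace A = 0; (iii) ⟨(A + Aᵀ) n, t⟩ = 0 for every t ∈ ℝ^d with ⟨t, n⟩ = 0, where Aᵀ is the adjoint (transpose) of A. Then A = 0. -/

import Mathlib

/-- Linear-algebraic core of the no-jump lemma for the velocity
gradient: if a linear map `A` on `ℝ^d` vanishes on the orthogonal complement of a
unit vector `n`, is trace free, and the symmetric part `A + Aᵀ` maps `n` into the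
span of `n` (i.e. `⟨(A + Aᵀ)n, t⟩ = 0` for all `t ⊥ n`), then `A = 0`. -/
theorem stmt11 (d : ℕ) (hd : 1 ≤ d)
    (n : EuclideanSpace ℝ (Fin d)) (hn : ‖n‖ = 1)
    (A : EuclideanSpace ℝ (Fin d) →ₗ[ℝ] EuclideanSpace ℝ (Fin d))
    (h1 : ∀ t, (inner ℝ t n : ℝ) = 0 → A t = 0)
    (h2 : LinearMap.trace ℝ (EuclideanSpace ℝ (Fin d)) A = 0)
    (h3 : ∀ t, (inner ℝ t n : ℝ) = 0 →
      (inner ℝ ((A + LinearMap.adjoint A) n) t : ℝ) = 0) :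
    A = 0 := by
  have hnn : (inner ℝ n n : ℝ) = 1 := by
    rw [real_inner_self_eq_norm_sq, hn]; norm_num
  -- A x = ⟨x, n⟩ • A n
  have hA : ∀ x, A x = (inner ℝ x n : ℝ) • A n := by
    intro x
    have ht : (inner ℝ (x - (inner ℝ x n : ℝ) • n) n : ℝ) = 0 := by
      rw [inner_sub_left, inner_smul_left]
      simp [hnn, hn]
    have := h1 _ ht
    rw [map_sub, map_smul, sub_eq_zero] at this
    simpa using this
  -- trace A = ⟨n, A n⟩ = 0
  have htr : (inner ℝ (A n) n : ℝ) = 0 := by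
    classical
    let b : OrthonormalBasis (Fin d) ℝ (EuclideanSpace ℝ (Fin d)) :=
      EuclideanSpace.basisFun (Fin d) ℝ
    have h := h2
    rw [LinearMap.trace_eq_matrix_trace ℝ b.toBasis A] at h
    have hdiag : ∀ i, (LinearMap.toMatrix b.toBasis b.toBasis A) i i
        = (inner ℝ (b i) (A (b i)) : ℝ) := by
      intro i
      rw [LinearMap.toMatrix_apply]
      simp [OrthonormalBasis.coe_toBasis, OrthonormalBasis.coe_toBasis_repr_apply,
        OrthonormalBasis.repr_apply_apply]
    rw [Matrix.trace] at h
    have hsum : ∑ i, (inner ℝ (b i) (A (b i)) : ℝ) = (inner ℝ (A n) n : ℝ) := by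
      calc ∑ i, (inner ℝ (b i) (A (b i)) : ℝ)
          = ∑ i, (inner ℝ (A n) (b i) : ℝ) * (inner ℝ (b i) n : ℝ) := by
            refine Finset.sum_congr rfl fun i _ => ?_
            rw [hA (b i), inner_smul_right, real_inner_comm (A n) (b i)]
            ring
        _ = (inner ℝ (A n) n : ℝ) := b.sum_inner_mul_inner (A n) n
    rw [show (Matrix.diag fun i j => (LinearMap.toMatrix b.toBasis b.toBasis A) i j)
        = fun i => (LinearMap.toMatrix b.toBasis b.toBasis A) i i from rfl] at h
    simp only [hdiag] at h
    rw [hsum] at h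
    exact h
  -- adjoint A n = 0
  have hadj : LinearMap.adjoint A n = 0 := by
    have h0 : (inner ℝ (LinearMap.adjoint A n) (LinearMap.adjoint A n) : ℝ) = 0 := by
      rw [LinearMap.adjoint_inner_left, hA, inner_smul_right,
        real_inner_comm (A n) n, htr]
      ring
    exact inner_self_eq_zero.mp h0
  -- A n = 0
  have hAn : A n = 0 := by
    have ht : (inner ℝ (A n) n : ℝ) = 0 := htr
    have := h3 (A n) ht
    rw [LinearMap.add_apply, hadj, add_zero] at this
    exact inner_self_eq_zero.mp this
  ext x
  rw [hA x, hAn]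
  simp
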